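/- Let u : 𝒮(ℝ×ℝ², ℂ) → ℂ be a continuous linear functional such that: (i) u(χ) = 0 for every Schwartz function χ with χ(t,ξ) = 0 whenever t > 0; and (ii) u(χ) = 0 for every Schwartz function χ such that 𝓕χ(ω,σ) = 0 whenever |ω| > ‖σ‖. Let φ, ψ ∈ 𝒮(ℝ×ℝ², ℂ) satisfy φ(t,ξ) = 0 for all t < 0, and 𝓕ψ(ω,σ) = 𝓕φ(ω,σ) − 𝓕φ(−ω,σ) for all (ω,σ) with |ω| > ‖σ‖. Then u(ψ) = u(φ). -/

import Mathlib

open MeasureTheory Real Complex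
open scoped RealInnerProductSpace

/-- Fourier transform on `ℝ × ℝ²`:
`𝓕f(ω,σ) = (2π)^{−3/2} ∫ f(t,ξ) e^{i(ωt + σ·ξ)} dt dξ`. -/
noncomputable def FT (f : ℝ × EuclideanSpace ℝ (Fin 2) → ℂ)
    (ω : ℝ) (σ : EuclideanSpace ℝ (Fin 2)) : ℂ :=
  (((2 * π : ℝ) ^ (-(3 : ℝ) / 2) : ℝ) : ℂ) *
    ∫ p : ℝ × EuclideanSpace ℝ (Fin 2),
      f p * Complex.exp (Complex.I * ((ω * p.1 + ⟪σ, p.2⟫ : ℝ) : ℂ))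

namespace Stmt13Aux

abbrev E := EuclideanSpace ℝ (Fin 2)

instance : (volume : Measure (ℝ × E)).IsAddHaarMeasure :=
  Measure.prod.instIsAddHaarMeasure volume volume

/-- Integrability of a Schwartz function times a unimodular exponential. -/
lemma int1 (f : SchwartzMap (ℝ × E) ℂ) (c : ℝ × E → ℝ) (hc : Continuous c) :
    Integrable (fun p => f p * Complex.exp (Complex.I * (c p : ℂ))) volume := by
  refine ((f.integrable (μ := volume)).norm.mono') ?_ ?_
  · exact (f.continuous.mul (by continuity)).aestronglyMeasurable
  · filter_upwards with p
    simp [norm_mul, Complex.norm_exp, Complex.mul_re]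

/-- Time-reflection as a continuous linear equivalence of `ℝ × E`. -/
noncomputable def refl2 : (ℝ × E) ≃L[ℝ] (ℝ × E) :=
  (ContinuousLinearEquiv.neg ℝ).prodCongr (ContinuousLinearEquiv.refl ℝ E)

lemma refl2_apply (p : ℝ × E) : refl2 p = (-p.1, p.2) := rfl

/-- Change of variables `t ↦ -t` in the Fourier transform. -/
lemma FT_reflect (f : SchwartzMap (ℝ × E) ℂ) (ω : ℝ) (σ : E) :
    FT (fun p => f (-p.1, p.2)) ω σ = FT (⇑f) (-ω) σ := by
  unfold FT
  congr 1
  have hm : MeasurePreserving (fun p : ℝ × E => ((-p.1, p.2) : ℝ × E)) volume volume :=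
    (Measure.measurePreserving_neg _).prod (MeasurePreserving.id _)
  have he : MeasurableEmbedding (fun p : ℝ × E => ((-p.1, p.2) : ℝ × E)) :=
    ((MeasurableEquiv.neg ℝ).prodCongr (MeasurableEquiv.refl E)).measurableEmbedding
  rw [← hm.integral_comp he
    (fun p : ℝ × E => f p * Complex.exp (Complex.I * ((-ω * p.1 + ⟪σ, p.2⟫ : ℝ) : ℂ)))]
  simp

end Stmt13Aux

open Stmt13Aux in
theorem stmt13
    (u : SchwartzMap (ℝ × EuclideanSpace ℝ (Fin 2)) ℂ →L[ℂ] ℂ)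
    (hsupp : ∀ χ : SchwartzMap (ℝ × EuclideanSpace ℝ (Fin 2)) ℂ,
      (∀ (t : ℝ) (ξ : EuclideanSpace ℝ (Fin 2)), 0 < t → χ (t, ξ) = 0) → u χ = 0)
    (hcone : ∀ χ : SchwartzMap (ℝ × EuclideanSpace ℝ (Fin 2)) ℂ,
      (∀ (ω : ℝ) (σ : EuclideanSpace ℝ (Fin 2)), ‖σ‖ < |ω| → FT (⇑χ) ω σ = 0) → u χ = 0)
    (φ ψ : SchwartzMap (ℝ × EuclideanSpace ℝ (Fin 2)) ℂ)
    (hφ : ∀ (t : ℝ) (ξ : EuclideanSpace ℝ (Fin 2)), t < 0 → φ (t, ξ) = 0)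
    (hψ : ∀ (ω : ℝ) (σ : EuclideanSpace ℝ (Fin 2)), ‖σ‖ < |ω| →
      FT (⇑ψ) ω σ = FT (⇑φ) ω σ - FT (⇑φ) (-ω) σ) :
    u ψ = u φ := by
  -- the time-reflected φ
  set φm : SchwartzMap (ℝ × E) ℂ :=
    SchwartzMap.compCLMOfContinuousLinearEquiv ℂ refl2 φ with hφm
  have hφm_apply : ∀ p : ℝ × E, φm p = φ (-p.1, p.2) := fun p => rfl
  -- u φm = 0 since φm is supported in t ≤ 0
  have hu_φm : u φm = 0 := by
    refine hsupp φm fun t ξ ht => ?_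
    rw [hφm_apply]
    exact hφ (-t) ξ (by simpa using ht)
  -- the combination χ := ψ - φ + φm has FT vanishing on the cone
  set χ : SchwartzMap (ℝ × E) ℂ := ψ - φ + φm with hχ
  have hFTχ : ∀ (ω : ℝ) (σ : E), ‖σ‖ < |ω| → FT (⇑χ) ω σ = 0 := by
    intro ω σ hσω
    have hsplit : FT (⇑χ) ω σ = FT (⇑ψ) ω σ - FT (⇑φ) ω σ + FT (⇑φm) ω σ := by
      unfold FT
      rw [← mul_sub, ← mul_add]
      congr 1
      have hc : Continuous fun p : ℝ × E => ω * p.1 + ⟪σ, p.2⟫ := by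
        apply Continuous.add
        · exact continuous_const.mul continuous_fst
        · exact (continuous_const.inner continuous_snd)
      have hiψ := int1 ψ _ hc
      have hiφ := int1 φ _ hc
      have hiφm := int1 φm _ hc
      have : ∀ p : ℝ × E,
          χ p * Complex.exp (Complex.I * ((ω * p.1 + ⟪σ, p.2⟫ : ℝ) : ℂ)) =
            ψ p * Complex.exp (Complex.I * ((ω * p.1 + ⟪σ, p.2⟫ : ℝ) : ℂ))
            - φ p * Complex.exp (Complex.I * ((ω * p.1 + ⟪σ, p.2⟫ : ℝ) : ℂ))
            + φm p * Complex.exp (Complex.I * ((ω * p.1 + ⟪σ, p.2⟫ : ℝ) : ℂ)) := by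
        intro p
        have : χ p = ψ p - φ p + φm p := by simp [hχ]
        rw [this]; ring
      have hsub : Integrable (fun p : ℝ × E =>
          ψ p * Complex.exp (Complex.I * ((ω * p.1 + ⟪σ, p.2⟫ : ℝ) : ℂ))
          - φ p * Complex.exp (Complex.I * ((ω * p.1 + ⟪σ, p.2⟫ : ℝ) : ℂ))) volume :=
        hiψ.sub hiφ
      rw [integral_congr_ae (Filter.Eventually.of_forall this),
        integral_add hsub hiφm, integral_sub hiψ hiφ]
    have hrefl : FT (⇑φm) ω σ = FT (⇑φ) (-ω) σ := by
      have : (⇑φm : ℝ × E → ℂ) = fun p => φ (-p.1, p.2) := funext hφm_apply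
      rw [this, FT_reflect]
    rw [hsplit, hrefl, hψ ω σ hσω]
    ring
  have huχ : u χ = 0 := hcone χ hFTχ
  have : u ψ - u φ + u φm = 0 := by
    rw [← map_sub, ← map_add]; exact huχ
  rw [hu_φm, add_zero, sub_eq_zero] at this
  exact this
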